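/- arXiv:2009.08945 — 2 statements merged into one kernel-verified Lean document; each statement's English description precedes it below -/
import Mathlib

section
/- The Kohn–Nirenberg transform on ℝⁿ satisfies the Moyal identity: for Schwartz functions u, v, f, g, the L² inner product ⟨R(u,v), R(f,g)⟩ over ℝⁿ×ℝⁿ equals ⟨u,f⟩ · conj(⟨v,g⟩). -/
open MeasureTheory Real

noncomputable def fourierTransform1 {n : ℕ} (v : EuclideanSpace ℝ (Fin n) → ℂ)
    (η : EuclideanSpace ℝ (Fin n)) : ℂ :=
  ∫ y, Complex.exp (Complex.I * (-2 * π * (inner ℝ y η : ℝ))) * v y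

noncomputable def Rih1 {n : ℕ} (u v : EuclideanSpace ℝ (Fin n) → ℂ)
    (x η : EuclideanSpace ℝ (Fin n)) : ℂ :=
  u x * Complex.exp (Complex.I * (-2 * π * (inner ℝ x η : ℝ))) *
    (starRingEnd ℂ) (fourierTransform1 v η)

open scoped FourierTransform RealInnerProductSpace ComplexConjugate SchwartzMap

lemma ft1_eq {n : ℕ} (v : 𝓢(EuclideanSpace ℝ (Fin n), ℂ)) (η : EuclideanSpace ℝ (Fin n)) :
    fourierTransform1 (fun t => v t) η = 𝓕 (⇑v) η := by
  rw [Real.fourier_eq']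
  unfold fourierTransform1
  congr 1 with y
  rw [smul_eq_mul]
  congr 1
  push_cast
  ring

lemma conj_ft {n : ℕ} (g : 𝓢(EuclideanSpace ℝ (Fin n), ℂ)) (x : EuclideanSpace ℝ (Fin n)) :
    𝓕 (fun η => conj (𝓕 (⇑g) η)) x = conj (g x) := by
  have hinv : 𝓕⁻ (𝓕 ⇑g) = ⇑g :=
    Continuous.fourierInv_fourier_eq g.continuous g.integrable
      (SchwartzMap.fourierTransformCLM ℂ g).integrable
  have h1 : ∀ η : EuclideanSpace ℝ (Fin n),
      Complex.exp (↑(-2 * π * ⟪η, x⟫) * Complex.I) • conj (𝓕 (⇑g) η)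
        = conj (Complex.exp (↑(2 * π * ⟪η, x⟫) * Complex.I) • 𝓕 (⇑g) η) := by
    intro η
    rw [smul_eq_mul, smul_eq_mul, map_mul, ← Complex.exp_conj, map_mul, Complex.conj_I,
      Complex.conj_ofReal]
    congr 2
    push_cast
    ring
  rw [Real.fourier_eq']
  simp_rw [h1]
  rw [integral_conj, ← Real.fourierInv_eq', hinv]

lemma integrable_conj' {α : Type*} [MeasurableSpace α] {μ : Measure α} {h : α → ℂ}
    (hh : Integrable h μ) : Integrable (fun x => conj (h x)) μ :=
  (Complex.conjCLE.toContinuousLinearMap).integrable_comp hh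

lemma parseval {n : ℕ} (v g : 𝓢(EuclideanSpace ℝ (Fin n), ℂ)) :
    ∫ η, 𝓕 (⇑v) η * conj (𝓕 (⇑g) η) = ∫ x, v x * conj (g x) := by
  have hG : Integrable (fun η => conj (𝓕 (⇑g) η)) :=
    integrable_conj' (SchwartzMap.fourierTransformCLM ℂ g).integrable
  have h := VectorFourier.integral_fourierIntegral_smul_eq_flip
    (L := innerₗ (EuclideanSpace ℝ (Fin n))) (μ := volume) (ν := volume)
    Real.continuous_fourierChar continuous_inner v.integrable hG
  rw [flip_innerₗ] at h
  simp only [smul_eq_mul] at h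
  calc ∫ η, 𝓕 (⇑v) η * conj (𝓕 (⇑g) η) = ∫ x, v x * 𝓕 (fun η => conj (𝓕 (⇑g) η)) x := h
    _ = ∫ x, v x * conj (g x) := by simp_rw [conj_ft]

/-- Moyal identity for the Kohn--Nirenberg transform on ℝⁿ. -/
theorem stmt1 (n : ℕ) (u v f g : SchwartzMap (EuclideanSpace ℝ (Fin n)) ℂ) :
    (∫ x, ∫ η, Rih1 (fun t => u t) (fun t => v t) x η *
        (starRingEnd ℂ) (Rih1 (fun t => f t) (fun t => g t) x η))
      = (∫ x, u x * (starRingEnd ℂ) (f x)) *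
        (starRingEnd ℂ) (∫ x, v x * (starRingEnd ℂ) (g x)) := by
  have key : ∀ x η : EuclideanSpace ℝ (Fin n),
      Rih1 (fun t => u t) (fun t => v t) x η *
        conj (Rih1 (fun t => f t) (fun t => g t) x η)
      = (u x * conj (f x)) * (conj (𝓕 (⇑v) η) * 𝓕 (⇑g) η) := by
    intro x η
    unfold Rih1
    rw [ft1_eq, ft1_eq]
    have hexp : Complex.exp (Complex.I * (-2 * π * (⟪x, η⟫ : ℝ))) *
        conj (Complex.exp (Complex.I * (-2 * π * (⟪x, η⟫ : ℝ)))) = 1 := by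
      rw [← Complex.exp_conj, map_mul, Complex.conj_I, ← Complex.exp_add]
      have : Complex.I * (-2 * π * (⟪x, η⟫ : ℝ)) +
          -Complex.I * conj (-2 * π * ((⟪x, η⟫ : ℝ) : ℂ)) = 0 := by
        simp only [map_mul, map_neg, map_ofNat, Complex.conj_ofReal]
        ring
      rw [this, Complex.exp_zero]
    rw [map_mul, map_mul, Complex.conj_conj]
    calc u x * Complex.exp (Complex.I * (-2 * π * (⟪x, η⟫ : ℝ))) * conj (𝓕 (⇑v) η) *
          (conj (f x) * conj (Complex.exp (Complex.I * (-2 * π * (⟪x, η⟫ : ℝ)))) * 𝓕 (⇑g) η)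
        = (u x * conj (f x)) * (conj (𝓕 (⇑v) η) * 𝓕 (⇑g) η) *
          (Complex.exp (Complex.I * (-2 * π * (⟪x, η⟫ : ℝ))) *
            conj (Complex.exp (Complex.I * (-2 * π * (⟪x, η⟫ : ℝ))))) := by ring
      _ = _ := by rw [hexp, mul_one]
  simp_rw [key, integral_const_mul, integral_mul_const]
  congr 1
  rw [← parseval v g, ← integral_conj]
  congr 1 with η
  rw [map_mul, Complex.conj_conj, mul_comm]
end

section
/- Let K : ℝ² → ℂ be K(x,y) = 1/|x-y| if xy < 0 and 0 otherwise (the Born–Jordan original localization kernel). Then for Schwartz functions u, v on ℝ, the bilinear form ∫∫ u(x) conj(K(x,y)) conj(v(y)) dy dx is well-defined (the integral converges absolutely) — in particular ∫∫ |u(x)| K(x,y) |v(y)| dy dx < ∞. -/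
open MeasureTheory

/-- The Born--Jordan original localization kernel on ℝ. -/
noncomputable def KBJ16 (x y : ℝ) : ℝ :=
  if x * y < 0 then |x - y|⁻¹ else 0

lemma abs_rpow_intervalInteg16 : IntervalIntegrable (fun x : ℝ => |x| ^ (-(1:ℝ)/2)) volume (-1) 1 := by
  have h01 : IntervalIntegrable (fun x : ℝ => |x| ^ (-(1:ℝ)/2)) volume 0 1 := by
    apply (intervalIntegral.intervalIntegrable_rpow' (by norm_num : (-1:ℝ) < -(1:ℝ)/2)).congr
    intro x hx
    rw [Set.uIoc_of_le (by norm_num : (0:ℝ) ≤ 1)] at hx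
    show x ^ (-(1:ℝ)/2) = |x| ^ (-(1:ℝ)/2)
    rw [abs_of_pos hx.1]
  have hneg : IntervalIntegrable (fun x : ℝ => |x| ^ (-(1:ℝ)/2)) volume (-1) 0 := by
    rw [IntervalIntegrable.iff_comp_neg]
    simpa [abs_neg] using h01.symm
  exact hneg.trans h01

lemma schwartz_mul_abs_rpow_integrable16 (w : SchwartzMap ℝ ℂ) :
    Integrable (fun x : ℝ => ‖w x‖ * |x| ^ (-(1:ℝ)/2)) := by
  have hmeas : AEStronglyMeasurable (fun x : ℝ => ‖w x‖ * |x| ^ (-(1:ℝ)/2)) volume := by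
    apply AEStronglyMeasurable.mul
    · exact w.continuous.norm.aestronglyMeasurable
    · exact (measurable_norm.pow_const _).aestronglyMeasurable
  set C := SchwartzMap.seminorm ℝ 0 0 w with hC
  have hbound : ∀ x : ℝ, ‖w x‖ ≤ C := fun x => w.norm_le_seminorm ℝ x
  have h1 : IntegrableOn (fun x : ℝ => ‖w x‖ * |x| ^ (-(1:ℝ)/2)) (Set.Ioc (-1:ℝ) 1) := by
    have hi : IntegrableOn (fun x : ℝ => C * |x| ^ (-(1:ℝ)/2)) (Set.Ioc (-1:ℝ) 1) := by
      have := abs_rpow_intervalInteg16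
      rw [intervalIntegrable_iff, Set.uIoc_of_le (by norm_num : (-1:ℝ) ≤ 1)] at this
      exact this.const_mul C
    apply hi.mono' (hmeas.restrict)
    filter_upwards with x
    rw [norm_mul, norm_norm, Real.norm_eq_abs,
      abs_of_nonneg (Real.rpow_nonneg (abs_nonneg x) _)]
    have : (0:ℝ) ≤ |x| ^ (-(1:ℝ)/2) := Real.rpow_nonneg (abs_nonneg x) _
    gcongr
    exact hbound x
  have h2 : IntegrableOn (fun x : ℝ => ‖w x‖ * |x| ^ (-(1:ℝ)/2)) {x : ℝ | 1 ≤ |x|} := by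
    apply (w.integrable.norm.integrableOn).mono' hmeas.restrict
    filter_upwards [ae_restrict_mem (by
      have hset : ({x : ℝ | 1 ≤ |x|}) = (Metric.ball (0:ℝ) 1)ᶜ := by
        ext x; simp [Real.dist_eq, not_lt]
      rw [hset]; exact Metric.isOpen_ball.isClosed_compl.measurableSet)] with x hx
    rw [norm_mul, norm_norm, Real.norm_eq_abs,
      abs_of_nonneg (Real.rpow_nonneg (abs_nonneg x) _)]
    have h1x : (1:ℝ) ≤ |x| := hx
    calc ‖w x‖ * |x| ^ (-(1:ℝ)/2) ≤ ‖w x‖ * 1 := by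
          gcongr
          exact Real.rpow_le_one_of_one_le_of_nonpos h1x (by norm_num)
      _ = ‖w x‖ := mul_one _
  rw [← integrableOn_univ]
  apply (h1.union h2).mono_set
  intro x _
  rcases le_or_gt 1 |x| with h | h
  · exact Or.inr h
  · exact Or.inl ⟨by cases abs_lt.mp h; linarith, by cases abs_lt.mp h; linarith⟩

lemma KBJ16_le (x y : ℝ) : KBJ16 x y ≤ |x| ^ (-(1:ℝ)/2) * |y| ^ (-(1:ℝ)/2) := by
  unfold KBJ16
  split_ifs with h
  · have hx : x ≠ 0 := fun hx => by simp [hx] at h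
    have hy : y ≠ 0 := fun hy => by simp [hy] at h
    have hax : (0:ℝ) < |x| := abs_pos.mpr hx
    have hay : (0:ℝ) < |y| := abs_pos.mpr hy
    have habs : |x - y| = |x| + |y| := by
      rcases lt_or_gt_of_ne hx with hx' | hx'
      · have hy' : 0 < y := by nlinarith
        rw [abs_of_neg hx', abs_of_pos hy', abs_of_neg (by linarith : x - y < 0)]; ring
      · have hy' : y < 0 := by nlinarith
        rw [abs_of_pos hx', abs_of_neg hy', abs_of_pos (by linarith : 0 < x - y)]; ring
    rw [habs, show -(1:ℝ)/2 = -(1/2) by ring, Real.rpow_neg hax.le, Real.rpow_neg hay.le,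
      ← Real.sqrt_eq_rpow, ← Real.sqrt_eq_rpow, ← mul_inv]
    have hsq : Real.sqrt |x| * Real.sqrt |y| ≤ |x| + |y| := by
      nlinarith [Real.sq_sqrt hax.le, Real.sq_sqrt hay.le, Real.sqrt_nonneg |x|,
        Real.sqrt_nonneg |y|, sq_nonneg (Real.sqrt |x| - Real.sqrt |y|)]
    exact inv_anti₀ (by positivity) hsq
  · positivity

/-- The bilinear form of the Born--Jordan original localization is absolutely
convergent for Schwartz functions. -/
theorem stmt16 (u v : SchwartzMap ℝ ℂ) :
    MeasureTheory.Integrable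
      (fun p : ℝ × ℝ => ‖u p.1‖ * KBJ16 p.1 p.2 * ‖v p.2‖) := by
  have hK : Measurable (fun p : ℝ × ℝ => KBJ16 p.1 p.2) := by
    unfold KBJ16
    exact Measurable.ite
      (measurableSet_lt (measurable_fst.mul measurable_snd) measurable_const)
      ((measurable_fst.sub measurable_snd).abs.inv) measurable_const
  have hmeas : AEStronglyMeasurable
      (fun p : ℝ × ℝ => ‖u p.1‖ * KBJ16 p.1 p.2 * ‖v p.2‖) (volume : Measure (ℝ × ℝ)) := by
    refine AEStronglyMeasurable.mul (AEStronglyMeasurable.mul ?_ hK.aestronglyMeasurable) ?_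
    · exact (u.continuous.norm.comp continuous_fst).aestronglyMeasurable
    · exact (v.continuous.norm.comp continuous_snd).aestronglyMeasurable
  have hg : Integrable (fun p : ℝ × ℝ =>
      (‖u p.1‖ * |p.1| ^ (-(1:ℝ)/2)) * (‖v p.2‖ * |p.2| ^ (-(1:ℝ)/2))) :=
    (schwartz_mul_abs_rpow_integrable16 u).mul_prod (schwartz_mul_abs_rpow_integrable16 v)
  apply hg.mono' hmeas
  filter_upwards with p
  have hKnn : 0 ≤ KBJ16 p.1 p.2 := by unfold KBJ16; split_ifs <;> positivity
  rw [Real.norm_eq_abs, abs_of_nonneg (by positivity)]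
  calc ‖u p.1‖ * KBJ16 p.1 p.2 * ‖v p.2‖
      ≤ ‖u p.1‖ * (|p.1| ^ (-(1:ℝ)/2) * |p.2| ^ (-(1:ℝ)/2)) * ‖v p.2‖ := by
        gcongr
        exact KBJ16_le p.1 p.2
    _ = (‖u p.1‖ * |p.1| ^ (-(1:ℝ)/2)) * (‖v p.2‖ * |p.2| ^ (-(1:ℝ)/2)) := by ring
end
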